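/- Let H₁ = {0} ∪ {1/n : n ∈ ℕ} ∪ {1} ∪ {1 + 1/n : n ∈ ℕ}. Then for every function K, defined on all bounded infinite subsets of ℝ with real values and satisfying strong internality (liminf H ≤ K(H) ≤ limsup H for every bounded infinite H ⊆ ℝ), there exists a sequence (L_k) of bounded infinite subsets of ℝ converging to H₁ in the Hausdorff metric such that K(L_{2k}) = 1 and K(L_{2k+1}) = 0 for all k; in particular K is not continuous at H₁ with respect to the Hausdorff metric. -/

import Mathlib

open Filter Topology

/-- The set of accumulation points of `H`. -/
def accPts (H : Set ℝ) : Set ℝ := {x | AccPt x (𝓟 H)}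

/-- The set `H₁ = {0} ∪ {1/n : n ∈ ℕ} ∪ {1} ∪ {1 + 1/n : n ∈ ℕ}`. -/
noncomputable def Hone : Set ℝ :=
  {0, 1} ∪ Set.range (fun n : ℕ => (1 : ℝ) / (n + 1)) ∪
    Set.range (fun n : ℕ => 1 + (1 : ℝ) / (n + 1))

lemma not_accPt_of_finite {C : Set ℝ} (hC : C.Finite) (x : ℝ) : ¬ AccPt x (𝓟 C) := by
  intro h
  rw [accPt_principal_iff_clusterPt, ← mem_closure_iff_clusterPt,
    ((hC.diff (t := {x})).isClosed).closure_eq] at h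
  exact h.2 rfl

lemma accPts_eq_singleton {A : Set ℝ} {c : ℝ} {w : ℕ → ℝ}
    (hw : Tendsto w atTop (𝓝 c)) (hne : ∀ n, w n ≠ c) (hsub : ∀ n, w n ∈ A)
    (hfin : ∀ r > 0, (A \ Metric.ball c r).Finite) :
    accPts A = {c} := by
  ext x
  simp only [accPts, Set.mem_setOf_eq, Set.mem_singleton_iff]
  constructor
  · intro hx
    by_contra hxc
    have hd : 0 < dist x c := dist_pos.2 hxc
    set r := dist x c / 2 with hrdef
    have hr : 0 < r := by positivity
    have hsub2 : A ∩ Metric.ball x r ⊆ A \ Metric.ball c r := by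
      rintro y ⟨hyA, hyb⟩
      refine ⟨hyA, fun hyc => ?_⟩
      rw [Metric.mem_ball] at hyb hyc
      have := dist_triangle x y c
      rw [dist_comm y x] at hyb
      linarith
    have hacc : AccPt x (𝓟 (A ∩ Metric.ball x r)) := by
      rw [accPt_iff_nhds] at hx ⊢
      intro U hU
      obtain ⟨y, ⟨hyU, hyA⟩, hy⟩ :=
        hx (U ∩ Metric.ball x r) (inter_mem hU (Metric.ball_mem_nhds _ hr))
      exact ⟨y, ⟨hyU.1, hyA, hyU.2⟩, hy⟩
    exact not_accPt_of_finite (((hfin r hr).subset hsub2)) x hacc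
  · rintro rfl
    rw [accPt_principal_iff_clusterPt, ← mem_closure_iff_clusterPt]
    exact mem_closure_of_tendsto hw
      (Eventually.of_forall fun n => ⟨hsub n, hne n⟩)

lemma finite_diff_ball {F : Set ℝ} (hF : F.Finite) {w : ℕ → ℝ} {c : ℝ}
    (hw : Tendsto w atTop (𝓝 c)) {r : ℝ} (hr : 0 < r) :
    ((F ∪ Set.range w) \ Metric.ball c r).Finite := by
  have hev : ∀ᶠ n in atTop, w n ∈ Metric.ball c r :=
    hw (Metric.ball_mem_nhds c hr)
  obtain ⟨N, hN⟩ := eventually_atTop.1 hev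
  have hsub : (F ∪ Set.range w) \ Metric.ball c r ⊆ F ∪ (w '' Set.Iio N) := by
    rintro x ⟨hx, hxb⟩
    rcases hx with h | ⟨n, rfl⟩
    · exact Or.inl h
    · refine Or.inr ⟨n, ?_, rfl⟩
      by_contra h
      exact hxb (hN n (not_lt.1 h))
  exact (hF.union ((Set.finite_Iio N).image w)).subset hsub

/-- no strongly internal mean on the bounded infinite subsets of `ℝ`
can be continuous at `H₁` with respect to the Hausdorff metric: there is a sequence
of bounded infinite sets converging to `H₁` in Hausdorff distance whose means
alternate between `1` and `0`. -/
theorem no_strongly_internal_mean_continuous (K : Set ℝ → ℝ)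
    (hK : ∀ H : Set ℝ, Bornology.IsBounded H → H.Infinite →
      sInf (accPts H) ≤ K H ∧ K H ≤ sSup (accPts H)) :
    ∃ L : ℕ → Set ℝ,
      (∀ k, Bornology.IsBounded (L k) ∧ (L k).Infinite) ∧
      Tendsto (fun k => Metric.hausdorffDist (L k) Hone) atTop (𝓝 0) ∧
      (∀ k, K (L (2 * k)) = 1 ∧ K (L (2 * k + 1)) = 0) := by
  set w0 : ℕ → ℝ := fun n => (1 : ℝ) / (n + 1) with hw0def
  set w1 : ℕ → ℝ := fun n => 1 + (1 : ℝ) / (n + 1) with hw1def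
  have hw0pos : ∀ n, 0 < w0 n := fun n => by positivity
  have hw0le : ∀ n, w0 n ≤ 1 := fun n => by
    rw [hw0def]
    rw [div_le_one (by positivity)]
    linarith [Nat.cast_nonneg (α := ℝ) n]
  have hw0tendsto : Tendsto w0 atTop (𝓝 0) :=
    tendsto_one_div_add_atTop_nhds_zero_nat
  have hw1tendsto : Tendsto w1 atTop (𝓝 1) := by
    have h := hw0tendsto.const_add (1 : ℝ)
    rw [add_zero] at h
    exact h
  have hw1lb : ∀ n, (1:ℝ) < w1 n := fun n => by
    have := hw0pos n; simp only [hw1def]; simp only [hw0def] at this; linarith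
  have hw1ub : ∀ n, w1 n ≤ 2 := fun n => by
    have := hw0le n; simp only [hw1def]; simp only [hw0def] at this; linarith
  have hw0inj : Function.Injective w0 := by
    intro a b h
    simp only [hw0def] at h
    field_simp at h
    have : (a:ℝ) = b := by linarith
    exact_mod_cast this
  have hw1inj : Function.Injective w1 := by
    intro a b h
    simp only [hw1def] at h
    have : w0 a = w0 b := by simp only [hw0def]; linarith
    exact hw0inj this
  -- the even and odd approximating sets
  set E : ℕ → Set ℝ := fun m =>
    (({0, 1} : Set ℝ) ∪ (w0 '' {n | n ≤ m})) ∪ Set.range w1 with hEdef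
  set O : ℕ → Set ℝ := fun m =>
    (({0, 1} : Set ℝ) ∪ (w1 '' {n | n ≤ m})) ∪ Set.range w0 with hOdef
  -- accumulation points
  have hEacc : ∀ m, accPts (E m) = {1} := by
    intro m
    refine accPts_eq_singleton hw1tendsto (fun n => ?_) (fun n => Or.inr ⟨n, rfl⟩)
      (fun r hr => finite_diff_ball ?_ hw1tendsto hr)
    · exact ne_of_gt (hw1lb n)
    · exact ((Set.finite_singleton (1:ℝ)).insert 0).union
        ((Set.finite_Iic m).image w0)
  have hOacc : ∀ m, accPts (O m) = {0} := by
    intro m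
    refine accPts_eq_singleton hw0tendsto (fun n => (hw0pos n).ne')
      (fun n => Or.inr ⟨n, rfl⟩) (fun r hr => finite_diff_ball ?_ hw0tendsto hr)
    exact ((Set.finite_singleton (1:ℝ)).insert 0).union
      ((Set.finite_Iic m).image w1)
  -- boundedness and infiniteness
  have hEbdd : ∀ m, Bornology.IsBounded (E m) := by
    intro m
    refine (Metric.isBounded_Icc (0 : ℝ) 2).subset ?_
    rintro x (( h | ⟨n, _, rfl⟩) | ⟨n, rfl⟩)
    · rcases h with rfl | rfl <;> constructor <;> norm_num
    · exact ⟨(hw0pos n).le, by linarith [hw0le n]⟩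
    · exact ⟨by linarith [hw1lb n], hw1ub n⟩
  have hObdd : ∀ m, Bornology.IsBounded (O m) := by
    intro m
    refine (Metric.isBounded_Icc (0 : ℝ) 2).subset ?_
    rintro x (( h | ⟨n, _, rfl⟩) | ⟨n, rfl⟩)
    · rcases h with rfl | rfl <;> constructor <;> norm_num
    · exact ⟨by linarith [hw1lb n], hw1ub n⟩
    · exact ⟨(hw0pos n).le, by linarith [hw0le n]⟩
  have hEinf : ∀ m, (E m).Infinite := fun m =>
    (Set.infinite_range_of_injective hw1inj).mono Set.subset_union_right
  have hOinf : ∀ m, (O m).Infinite := fun m =>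
    (Set.infinite_range_of_injective hw0inj).mono Set.subset_union_right
  -- K values
  have hKE : ∀ m, K (E m) = 1 := by
    intro m
    obtain ⟨h1, h2⟩ := hK (E m) (hEbdd m) (hEinf m)
    rw [hEacc m, csInf_singleton] at h1
    rw [hEacc m, csSup_singleton] at h2
    linarith
  have hKO : ∀ m, K (O m) = 0 := by
    intro m
    obtain ⟨h1, h2⟩ := hK (O m) (hObdd m) (hOinf m)
    rw [hOacc m, csInf_singleton] at h1
    rw [hOacc m, csSup_singleton] at h2
    linarith
  -- Hausdorff distance bounds
  have hHone : Hone = (({0, 1} : Set ℝ) ∪ Set.range w0) ∪ Set.range w1 := rfl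
  have hEdist : ∀ m, Metric.hausdorffDist (E m) Hone ≤ 1 / (m + 1) := by
    intro m
    apply Metric.hausdorffDist_le_of_mem_dist (by positivity)
    · intro x hx
      refine ⟨x, ?_, by rw [dist_self]; positivity⟩
      rw [hHone]
      rcases hx with (h | ⟨n, _, rfl⟩) | h
      · exact Or.inl (Or.inl h)
      · exact Or.inl (Or.inr ⟨n, rfl⟩)
      · exact Or.inr h
    · intro x hx
      rw [hHone] at hx
      rcases hx with (h | ⟨n, rfl⟩) | h
      · exact ⟨x, Or.inl (Or.inl h), by rw [dist_self]; positivity⟩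
      · by_cases hn : n ≤ m
        · exact ⟨w0 n, Or.inl (Or.inr ⟨n, hn, rfl⟩), by rw [dist_self]; positivity⟩
        · refine ⟨0, Or.inl (Or.inl (Or.inl rfl)), ?_⟩
          rw [Real.dist_eq, sub_zero, abs_of_pos (hw0pos n)]
          apply one_div_le_one_div_of_le (by positivity)
          have : (m : ℝ) ≤ n := by exact_mod_cast (not_le.1 hn).le
          linarith
      · exact ⟨x, Or.inr h, by rw [dist_self]; positivity⟩
  have hOdist : ∀ m, Metric.hausdorffDist (O m) Hone ≤ 1 / (m + 1) := by
    intro m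
    apply Metric.hausdorffDist_le_of_mem_dist (by positivity)
    · intro x hx
      refine ⟨x, ?_, by rw [dist_self]; positivity⟩
      rw [hHone]
      rcases hx with (h | ⟨n, _, rfl⟩) | h
      · exact Or.inl (Or.inl h)
      · exact Or.inr ⟨n, rfl⟩
      · exact Or.inl (Or.inr h)
    · intro x hx
      rw [hHone] at hx
      rcases hx with (h | h) | ⟨n, rfl⟩
      · exact ⟨x, Or.inl (Or.inl h), by rw [dist_self]; positivity⟩
      · exact ⟨x, Or.inr h, by rw [dist_self]; positivity⟩
      · by_cases hn : n ≤ m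
        · exact ⟨w1 n, Or.inl (Or.inr ⟨n, hn, rfl⟩), by rw [dist_self]; positivity⟩
        · refine ⟨1, Or.inl (Or.inl (Or.inr rfl)), ?_⟩
          have : w1 n - 1 = w0 n := by simp [hw1def, hw0def]
          rw [Real.dist_eq, this, abs_of_pos (hw0pos n)]
          apply one_div_le_one_div_of_le (by positivity)
          have : (m : ℝ) ≤ n := by exact_mod_cast (not_le.1 hn).le
          linarith
  -- the sequence
  refine ⟨fun k => if Even k then E (k / 2) else O (k / 2), ?_, ?_, ?_⟩
  · intro k
    by_cases h : Even k <;> simp only [h, if_true, if_false, if_pos, if_neg, not_false_iff] <;>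
      [exact ⟨hEbdd _, hEinf _⟩; exact ⟨hObdd _, hOinf _⟩]
  · have hb : ∀ k : ℕ, Metric.hausdorffDist
        ((fun k => if Even k then E (k / 2) else O (k / 2)) k) Hone ≤ 2 / (k + 1) := by
      intro k
      rcases Nat.even_or_odd k with ⟨m, hm⟩ | ⟨m, hm⟩
      · have hk : k / 2 = m := by omega
        have he : Even k := ⟨m, hm⟩
        simp only [if_pos he, hk]
        refine (hEdist m).trans ?_
        rw [div_le_div_iff₀ (by positivity) (by positivity)]
        have : (k : ℝ) = 2 * m := by exact_mod_cast hm.trans (two_mul m).symm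
        nlinarith
      · have hk : k / 2 = m := by omega
        have ho : ¬ Even k := by
          rw [hm]; exact Nat.not_even_iff_odd.2 ⟨m, rfl⟩
        simp only [if_neg ho, hk]
        refine (hOdist m).trans ?_
        rw [div_le_div_iff₀ (by positivity) (by positivity)]
        have : (k : ℝ) = 2 * m + 1 := by exact_mod_cast hm
        nlinarith
    have ht : Tendsto (fun k : ℕ => (2 : ℝ) / (k + 1)) atTop (𝓝 0) := by
      have h2 : Tendsto (fun k : ℕ => 2 * ((1 : ℝ) / (k + 1))) atTop (𝓝 (2 * 0)) :=
        hw0tendsto.const_mul 2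
      rw [mul_zero] at h2
      simpa [mul_one_div, div_eq_mul_inv] using h2
    exact squeeze_zero (fun k => Metric.hausdorffDist_nonneg) hb ht
  · intro k
    constructor
    · have he : Even (2 * k) := ⟨k, (two_mul k)⟩
      have hk : 2 * k / 2 = k := by omega
      simp only [if_pos he, hk]
      exact hKE k
    · have ho : ¬ Even (2 * k + 1) := by
        simp [Nat.even_add_one, Nat.even_mul]
      have hk : (2 * k + 1) / 2 = k := by omega
      simp only [if_neg ho, hk]
      exact hKO k
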